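/- If g : M → L is a dense frame homomorphism, M is a regular frame and L is a compact frame, then g is injective. -/

import Mathlib

/-- The well-inside relation of a frame: `b` is well inside `a` iff `bᶜ ⊔ a = ⊤`. -/
def WellInside {L : Type*} [Order.Frame L] (b a : L) : Prop := bᶜ ⊔ a = ⊤

/-- A frame is regular if every element is the join of the elements well inside it. -/
def IsRegularFrame (L : Type*) [Order.Frame L] : Prop :=
  ∀ a : L, a = sSup {b | WellInside b a}

/-- A frame is compact if `⊤` is a compact element. -/
def IsCompactFrame (L : Type*) [Order.Frame L] : Prop :=
  ∀ S : Set L, ⊤ ≤ sSup S → ∃ T : Set L, T ⊆ S ∧ T.Finite ∧ ⊤ ≤ sSup T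

lemma wellInside_bot {L : Type*} [Order.Frame L] (a : L) : WellInside ⊥ a := by
  simp [WellInside]

lemma wellInside_sup {L : Type*} [Order.Frame L] {a b c : L}
    (hb : WellInside b a) (hc : WellInside c a) : WellInside (b ⊔ c) a := by
  unfold WellInside at *
  rw [compl_sup, sup_inf_right, hb, hc, inf_top_eq]

lemma wellInside_le {L : Type*} [Order.Frame L] {a b : L}
    (hb : WellInside b a) : b ≤ a := by
  have : b = b ⊓ (bᶜ ⊔ a) := by rw [hb, inf_top_eq]
  calc b = b ⊓ (bᶜ ⊔ a) := this
    _ = (b ⊓ bᶜ) ⊔ (b ⊓ a) := inf_sup_left _ _ _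
    _ ≤ a := by simp

lemma exists_wellInside_preimage {M L : Type*} [Order.Frame M] [Order.Frame L]
    (g : FrameHom M L) {x : M} {T : Set L} (hT : T.Finite)
    (hsub : T ⊆ g '' {b | WellInside b x}) :
    ∃ u : M, WellInside u x ∧ sSup T ≤ g u := by
  revert hsub
  refine Set.Finite.induction_on
    (motive := fun T _ => T ⊆ g '' {b | WellInside b x} → ∃ u : M, WellInside u x ∧ sSup T ≤ g u)
    T hT ?_ ?_
  · exact fun _ => ⟨⊥, wellInside_bot x, by simp⟩
  · intro y s _ _ ih hsub
    obtain ⟨u, hu, hle⟩ := ih fun b hb => hsub (Set.mem_insert_of_mem _ hb)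
    obtain ⟨c, hc, hgc⟩ := hsub (Set.mem_insert _ _)
    refine ⟨c ⊔ u, wellInside_sup hc hu, ?_⟩
    rw [sSup_insert, map_sup, hgc]
    exact sup_le_sup_left hle _

/-- A dense frame homomorphism from a regular frame to a compact frame is injective. -/
theorem dense_frameHom_injective
    {M L : Type*} [Order.Frame M] [Order.Frame L] (g : FrameHom M L)
    (hdense : ∀ a : M, g a = ⊥ → a = ⊥)
    (hreg : IsRegularFrame M) (hcomp : IsCompactFrame L) :
    Function.Injective g := by
  -- g is codense
  have hcodense : ∀ x : M, g x = ⊤ → x = ⊤ := by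
    intro x hx
    have hW : x = sSup {b | WellInside b x} := hreg x
    have htop : (⊤ : L) ≤ sSup (g '' {b | WellInside b x}) := by
      rw [← map_sSup, ← hW, hx]
    obtain ⟨T, hTsub, hTfin, hTtop⟩ := hcomp _ htop
    obtain ⟨u, hwi, hle⟩ := exists_wellInside_preimage g hTfin hTsub
    have hgu : g u = ⊤ := le_antisymm le_top (le_trans hTtop hle)
    have hcompl : uᶜ = ⊥ := by
      apply hdense
      have : g uᶜ = g uᶜ ⊓ g u := by rw [hgu, inf_top_eq]
      rw [this, ← map_inf]
      simp
    have := hwi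
    unfold WellInside at this
    rw [hcompl, bot_sup_eq] at this
    exact this
  -- g is order-reflecting
  have hle : ∀ a b : M, g a ≤ g b → a ≤ b := by
    intro a b hab
    conv_lhs => rw [hreg a]
    refine sSup_le fun c hc => ?_
    have htop : g (cᶜ ⊔ b) = ⊤ := by
      refine le_antisymm le_top ?_
      have : (⊤ : L) = g (cᶜ ⊔ a) := by rw [hc]; simp
      rw [this, map_sup, map_sup]
      exact sup_le_sup_left hab _
    have h2 : cᶜ ⊔ b = ⊤ := hcodense _ htop
    calc c = c ⊓ (cᶜ ⊔ b) := by rw [h2, inf_top_eq]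
      _ = (c ⊓ cᶜ) ⊔ (c ⊓ b) := inf_sup_left _ _ _
      _ ≤ b := by simp
  intro a b hab
  exact le_antisymm (hle _ _ hab.le) (hle _ _ hab.ge)
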